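/- arXiv:2112.08975 — 3 statements merged into one kernel-verified Lean document; each statement's English description precedes it below -/
import Mathlib

section
/- Let 1 < g₀ ≤ g⁰ and let H : (0,∞) → (0,∞) be a differentiable strictly increasing bijection of (0,∞) onto (0,∞) with 1/g⁰ ≤ t·H′(t)/H(t) ≤ 1/g₀ for all t > 0. Let 0 < α < 1/g⁰ and define K(t) = t^{−α}·H(t). Then K is a strictly increasing bijection of (0,∞) onto (0,∞), its inverse Ψ = K⁻¹ is differentiable, and Ψ satisfies 1/(1/g₀ − α) ≤ s·Ψ′(s)/Ψ(s) ≤ 1/(1/g⁰ − α) for all s > 0. -/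
lemma aux_deriv (H H' : ℝ → ℝ) (β t : ℝ) (ht : 0 < t) (hH : HasDerivAt H (H' t) t) :
    HasDerivAt (fun u => u ^ (-β) * H u) (t ^ (-β - 1) * (t * H' t - β * H t)) t := by
  have h1 : HasDerivAt (fun u : ℝ => u ^ (-β)) (-β * t ^ (-β - 1)) t :=
    Real.hasDerivAt_rpow_const (Or.inl ht.ne')
  have h2 := h1.mul hH
  have key : t ^ (-β) = t ^ (-β - 1) * t := by
    rw [← Real.rpow_add_one ht.ne']; ring_nf
  have h3 : t ^ (-β - 1) * (t * H' t - β * H t) = -β * t ^ (-β - 1) * H t + t ^ (-β) * H' t := by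
    rw [key]; ring
  rw [h3]; exact h2

/-- if `H : (0,∞) → (0,∞)` is a differentiable strictly increasing
bijection with `1/g⁰ ≤ t·H′(t)/H(t) ≤ 1/g₀` on `(0,∞)`, `0 < α < 1/g⁰`, and
`K(t) = t^{−α}·H(t)`, then `K` is a strictly increasing bijection of `(0,∞)`
onto itself, its inverse `Ψ` is differentiable, and
`1/(1/g₀ − α) ≤ s·Ψ′(s)/Ψ(s) ≤ 1/(1/g⁰ − α)` for all `s > 0`. -/
theorem stmt_12 (g₀ gS : ℝ) (hg₀ : 1 < g₀) (hle : g₀ ≤ gS)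
    (H H' : ℝ → ℝ)
    (hpos : ∀ t > (0:ℝ), 0 < H t)
    (hmono : StrictMonoOn H (Set.Ioi 0))
    (hbij : Set.BijOn H (Set.Ioi 0) (Set.Ioi 0))
    (hderiv : ∀ t > (0:ℝ), HasDerivAt H (H' t) t)
    (hSC : ∀ t > (0:ℝ), 1 / gS ≤ t * H' t / H t ∧ t * H' t / H t ≤ 1 / g₀)
    (α : ℝ) (hα0 : 0 < α) (hαlt : α < 1 / gS)
    (K : ℝ → ℝ) (hK : ∀ t > (0:ℝ), K t = t ^ (-α) * H t) :
    StrictMonoOn K (Set.Ioi 0) ∧ Set.BijOn K (Set.Ioi 0) (Set.Ioi 0) ∧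
      ∀ Ψ : ℝ → ℝ, (∀ t > (0:ℝ), Ψ (K t) = t) → (∀ s > (0:ℝ), K (Ψ s) = s) →
        ∀ s > (0:ℝ), ∃ d : ℝ, HasDerivAt Ψ d s ∧
          1 / (1 / g₀ - α) ≤ s * d / Ψ s ∧ s * d / Ψ s ≤ 1 / (1 / gS - α) := by
  have hg₀0 : (0:ℝ) < g₀ := lt_trans one_pos hg₀
  have hgS0 : (0:ℝ) < gS := lt_of_lt_of_le hg₀0 hle
  have hinvle : 1 / gS ≤ 1 / g₀ := one_div_le_one_div_of_le hg₀0 hle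
  have hα₀g : α < 1 / g₀ := lt_of_lt_of_le hαlt hinvle
  set K' : ℝ → ℝ := fun u => u ^ (-α - 1) * (u * H' u - α * H u) with hK'def
  -- numerator positivity
  have hnum : ∀ t > (0:ℝ), 0 < t * H' t - α * H t := by
    intro t ht
    have hH := hpos t ht
    have h1 : (1 / gS) * H t ≤ t * H' t := (le_div_iff₀ hH).mp (hSC t ht).1
    nlinarith [mul_lt_mul_of_pos_right hαlt hH]
  have hK'pos : ∀ t > (0:ℝ), 0 < K' t := fun t ht =>
    mul_pos (Real.rpow_pos_of_pos ht _) (hnum t ht)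
  have hKd : ∀ t > (0:ℝ), HasDerivAt K (K' t) t := by
    intro t ht
    have h := aux_deriv H H' α t ht (hderiv t ht)
    exact h.congr_of_eventuallyEq
      (Filter.eventuallyEq_of_mem (Ioi_mem_nhds ht) (fun u hu => hK u hu))
  have hKpos : ∀ t > (0:ℝ), 0 < K t := by
    intro t ht
    rw [hK t ht]
    exact mul_pos (Real.rpow_pos_of_pos ht _) (hpos t ht)
  -- strict monotonicity
  have hKmono : StrictMonoOn K (Set.Ioi 0) := by
    apply strictMonoOn_of_deriv_pos (convex_Ioi 0)
    · exact fun x hx => ((hKd x hx).continuousAt).continuousWithinAt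
    · intro x hx
      rw [interior_Ioi] at hx
      rw [(hKd x hx).deriv]
      exact hK'pos x hx
  -- the comparison function F
  set e : ℝ := 1 / gS - α with hedef
  have he : 0 < e := sub_pos.mpr hαlt
  set F : ℝ → ℝ := fun u => u ^ (-(1/gS)) * H u with hFdef
  have hFd : ∀ t > (0:ℝ), HasDerivAt F (t ^ (-(1/gS) - 1) * (t * H' t - (1/gS) * H t)) t :=
    fun t ht => aux_deriv H H' (1/gS) t ht (hderiv t ht)
  have hFmono : MonotoneOn F (Set.Ioi 0) := by
    apply monotoneOn_of_deriv_nonneg (convex_Ioi 0)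
    · exact fun x hx => ((hFd x hx).continuousAt).continuousWithinAt
    · intro x hx
      rw [interior_Ioi] at hx
      exact (hFd x hx).differentiableAt.differentiableWithinAt
    · intro x hx
      rw [interior_Ioi] at hx
      rw [(hFd x hx).deriv]
      apply mul_nonneg (Real.rpow_pos_of_pos hx _).le
      have h1 : (1 / gS) * H x ≤ x * H' x := (le_div_iff₀ (hpos x hx)).mp (hSC x hx).1
      linarith
  have hF1 : F 1 = H 1 := by simp [hFdef]
  have hKF : ∀ u > (0:ℝ), K u = u ^ e * F u := by
    intro u hu
    rw [hK u hu, hFdef]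
    have : (u:ℝ) ^ (-α) = u ^ e * u ^ (-(1/gS)) := by
      rw [← Real.rpow_add hu, hedef]; ring_nf
    rw [this]; ring
  -- bounds for small / large u
  have hKsmall : ∀ u, 0 < u → u ≤ 1 → K u ≤ u ^ e * H 1 := by
    intro u hu hu1
    rw [hKF u hu]
    have : F u ≤ H 1 := hF1 ▸ hFmono hu (by norm_num) hu1
    exact mul_le_mul_of_nonneg_left this (Real.rpow_pos_of_pos hu _).le
  have hKlarge : ∀ u, 1 ≤ u → u ^ e * H 1 ≤ K u := by
    intro u hu1
    have hu : (0:ℝ) < u := lt_of_lt_of_le one_pos hu1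
    rw [hKF u hu]
    have : H 1 ≤ F u := hF1 ▸ hFmono (by norm_num) hu hu1
    exact mul_le_mul_of_nonneg_left this (Real.rpow_pos_of_pos hu _).le
  -- surjectivity
  have hsurj : ∀ y > (0:ℝ), ∃ t > (0:ℝ), K t = y := by
    intro y hy
    have hH1 := hpos 1 one_pos
    set c : ℝ := (y / H 1) ^ e⁻¹ with hcdef
    have hc : 0 < c := Real.rpow_pos_of_pos (div_pos hy hH1) _
    have hce : c ^ e = y / H 1 := by
      rw [hcdef, ← Real.rpow_mul (div_pos hy hH1).le, inv_mul_cancel₀ he.ne', Real.rpow_one]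
    set a : ℝ := min 1 c with hadef
    set b : ℝ := max 1 c with hbdef
    have ha : 0 < a := lt_min one_pos hc
    have hab : a ≤ b := le_trans (min_le_left _ _) (le_max_left _ _)
    have hKa : K a ≤ y := by
      have h1 : K a ≤ a ^ e * H 1 := hKsmall a ha (min_le_left _ _)
      have h2 : a ^ e ≤ c ^ e := Real.rpow_le_rpow ha.le (min_le_right _ _) he.le
      have h3 : c ^ e * H 1 = y := by rw [hce, div_mul_cancel₀ _ hH1.ne']
      nlinarith
    have hKb : y ≤ K b := by
      have h1 : b ^ e * H 1 ≤ K b := hKlarge b (le_max_left _ _)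
      have h2 : c ^ e ≤ b ^ e := Real.rpow_le_rpow hc.le (le_max_right _ _) he.le
      have h3 : c ^ e * H 1 = y := by rw [hce, div_mul_cancel₀ _ hH1.ne']
      nlinarith
    have hcont : ContinuousOn K (Set.Icc a b) := fun x hx =>
      ((hKd x (lt_of_lt_of_le ha hx.1)).continuousAt).continuousWithinAt
    obtain ⟨t, htmem, hKt⟩ := intermediate_value_Icc hab hcont ⟨hKa, hKb⟩
    exact ⟨t, lt_of_lt_of_le ha htmem.1, hKt⟩
  have hbijK : Set.BijOn K (Set.Ioi 0) (Set.Ioi 0) := by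
    refine ⟨fun t ht => hKpos t ht, hKmono.injOn, ?_⟩
    intro y hy
    obtain ⟨t, ht, hKt⟩ := hsurj y hy
    exact ⟨t, ht, hKt⟩
  refine ⟨hKmono, hbijK, ?_⟩
  intro Ψ hΨK hKΨ s hs
  obtain ⟨t, ht, hKt⟩ := hsurj s hs
  have hΨs : Ψ s = t := by rw [← hKt, hΨK t ht]
  -- continuity of Ψ at s
  have hcontΨ : ContinuousAt Ψ s := by
    rw [Metric.continuousAt_iff]
    intro ε hε
    set ε' : ℝ := min ε (t/2) with hε'def
    have hε' : 0 < ε' := lt_min hε (by linarith)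
    have htε : 0 < t - ε' := by
      have : ε' ≤ t/2 := min_le_right _ _
      linarith
    have hlow : K (t - ε') < s := by
      rw [← hKt]
      exact hKmono htε ht (by linarith)
    have hhigh : s < K (t + ε') := by
      rw [← hKt]
      exact hKmono ht (by simp only [Set.mem_Ioi]; linarith) (by linarith)
    refine ⟨min (s - K (t - ε')) (K (t + ε') - s),
      lt_min (by linarith) (by linarith), ?_⟩
    intro x hx
    rw [Real.dist_eq] at hx ⊢
    have hxabs := abs_lt.mp hx
    have hx1 : K (t - ε') < x := by
      have := min_le_left (s - K (t - ε')) (K (t + ε') - s)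
      linarith [hxabs.1]
    have hx2 : x < K (t + ε') := by
      have := min_le_right (s - K (t - ε')) (K (t + ε') - s)
      linarith [hxabs.2]
    have hx0 : 0 < x := lt_trans (hKpos _ htε) hx1
    obtain ⟨u, hu, hKu⟩ := hsurj x hx0
    have hΨx : Ψ x = u := by rw [← hKu, hΨK u hu]
    have hu1 : t - ε' < u := by
      by_contra hcon
      push_neg at hcon
      have := hKmono.monotoneOn hu htε hcon
      rw [hKu] at this
      linarith
    have hu2 : u < t + ε' := by
      by_contra hcon
      push_neg at hcon
      have := hKmono.monotoneOn (by simp only [Set.mem_Ioi]; linarith : (t+ε') ∈ Set.Ioi (0:ℝ)) hu hcon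
      rw [hKu] at this
      linarith
    rw [hΨx, hΨs, abs_lt]
    have hεle : ε' ≤ ε := min_le_left _ _
    exact ⟨by linarith, by linarith⟩
  -- derivative of Ψ
  have hdΨ : HasDerivAt Ψ ((K' t)⁻¹) s := by
    have hKdΨ : HasDerivAt K (K' t) (Ψ s) := by rw [hΨs]; exact hKd t ht
    apply HasDerivAt.of_local_left_inverse hcontΨ hKdΨ (hK'pos t ht).ne'
    exact Filter.eventually_of_mem (Ioi_mem_nhds hs) (fun y hy => hKΨ y hy)
  have hH := hpos t ht
  have hrp : (0:ℝ) < t ^ (-α - 1) := Real.rpow_pos_of_pos ht _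
  have hN := hnum t ht
  have hkey : s * (K' t)⁻¹ / Ψ s = H t / (t * H' t - α * H t) := by
    rw [hΨs, ← hKt, hK t ht]
    simp only [hK'def]
    have htα : t ^ (-α) = t ^ (-α - 1) * t := by
      rw [← Real.rpow_add_one ht.ne']; ring_nf
    rw [htα, mul_inv]
    field_simp
  have h1 : t * H' t ≤ (1/g₀) * H t := (div_le_iff₀ hH).mp (hSC t ht).2
  have h2 : (1/gS) * H t ≤ t * H' t := (le_div_iff₀ hH).mp (hSC t ht).1
  refine ⟨(K' t)⁻¹, hdΨ, ?_, ?_⟩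
  · rw [hkey, div_le_div_iff₀ (by linarith) hN]
    nlinarith
  · rw [hkey, div_le_div_iff₀ hN (by linarith)]
    rw [hedef]
    nlinarith
end

section
/- Let g be a density satisfying (SC) with constants 1 < g₀ ≤ g⁰, let N ≥ 1, and for ξ ∈ ℝ^N define a(ξ) = (g(‖ξ‖)/‖ξ‖)·ξ for ξ ≠ 0 and a(0) = 0. Then for all ξ, η ∈ ℝ^N with ξ ≠ η, writing θ_t = t·ξ + (1−t)·η, one has ⟨a(ξ) − a(η), ξ − η⟩ ≥ min(1, g₀ − 1)·‖ξ − η‖²·∫₀¹ (g(‖θ_t‖)/‖θ_t‖) dt, where the integrand (defined for all but at most one t ∈ [0,1]) is integrable. -/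
/-- A density `g` (with derivative `g'` on `(0,∞)`) satisfying the structural
condition (SC) with constants `1 < g₀ ≤ g⁰`. -/
def IsDensitySC (g g' : ℝ → ℝ) (p q : ℝ) : Prop :=
  g 0 = 0 ∧ (∀ t > (0:ℝ), 0 < g t) ∧ (∀ t > (0:ℝ), HasDerivAt g (g' t) t) ∧
  ContinuousOn g' (Set.Ioi 0) ∧
  (∀ t > (0:ℝ), p - 1 ≤ t * g' t / g t ∧ t * g' t / g t ≤ q - 1)


open MeasureTheory Set

lemma aux_abs_rpow_int {r : ℝ} (hr : -1 < r) (c a b : ℝ) :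
    IntervalIntegrable (fun t => |t - c| ^ r) volume a b := by
  suffices H : ∀ d, IntervalIntegrable (fun t => |t - c| ^ r) volume c d from
    (H a).symm.trans (H b)
  intro d
  rcases le_total c d with hcd | hcd
  · rw [intervalIntegrable_iff, uIoc_of_le hcd]
    have h1 : IntervalIntegrable (fun t : ℝ => (t - c) ^ r) volume c d := by
      simpa using (intervalIntegral.intervalIntegrable_rpow' (a := 0) (b := d - c) hr).comp_sub_right c
    rw [intervalIntegrable_iff, uIoc_of_le hcd] at h1
    refine h1.congr_fun (fun t ht => ?_) measurableSet_Ioc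
    rw [abs_of_nonneg (by linarith [ht.1] : (0:ℝ) ≤ t - c)]
  · rw [intervalIntegrable_iff, uIoc_of_ge hcd]
    have h1 : IntervalIntegrable (fun t : ℝ => (c - t) ^ r) volume d c := by
      simpa using (intervalIntegral.intervalIntegrable_rpow' (a := c - d) (b := 0) hr).comp_sub_left c
    rw [intervalIntegrable_iff, uIoc_of_le hcd] at h1
    refine h1.congr_fun (fun t ht => ?_) measurableSet_Ioc
    rw [abs_of_nonpos (by linarith [ht.2] : t - c ≤ 0), neg_sub]

lemma aux_psi_mono {g g' : ℝ → ℝ} {g₀ gS : ℝ} (hg : IsDensitySC g g' g₀ gS) :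
    MonotoneOn (fun t => g t / t ^ (g₀ - 1)) (Set.Ioi (0:ℝ)) := by
  obtain ⟨hg0, hpos, hderiv, hcont, hSC⟩ := hg
  have hD : ∀ x ∈ Set.Ioi (0:ℝ), HasDerivAt (fun t => g t / t ^ (g₀ - 1))
      ((g' x * x ^ (g₀ - 1) - g x * ((g₀ - 1) * x ^ (g₀ - 1 - 1))) / (x ^ (g₀ - 1)) ^ 2) x := by
    intro x hx
    exact (hderiv x hx).div (Real.hasDerivAt_rpow_const (Or.inl (ne_of_gt hx)))
      (ne_of_gt (Real.rpow_pos_of_pos hx _))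
  apply monotoneOn_of_deriv_nonneg (convex_Ioi 0)
  · exact fun x hx => ((hD x hx).continuousAt).continuousWithinAt
  · intro x hx
    rw [interior_Ioi] at hx
    exact ((hD x hx).differentiableAt).differentiableWithinAt
  · intro x hx
    rw [interior_Ioi] at hx
    rw [(hD x hx).deriv]
    apply div_nonneg _ (sq_nonneg _)
    have hxp : (0:ℝ) < x ^ (g₀ - 1 - 1) := Real.rpow_pos_of_pos hx _
    have hgx := hpos x hx
    have hkey : (g₀ - 1) * g x ≤ x * g' x := by
      have := (hSC x hx).1
      calc (g₀ - 1) * g x ≤ (x * g' x / g x) * g x := by nlinarith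
        _ = x * g' x := by field_simp
    have hsplit : x ^ (g₀ - 1) = x * x ^ (g₀ - 1 - 1) := by
      conv_lhs => rw [show g₀ - 1 = 1 + (g₀ - 1 - 1) by ring, Real.rpow_add hx, Real.rpow_one]
    rw [hsplit]
    nlinarith [mul_le_mul_of_nonneg_right hkey hxp.le]

lemma aux_g_bound {g g' : ℝ → ℝ} {g₀ gS : ℝ} (hg : IsDensitySC g g' g₀ gS)
    {r M : ℝ} (hr : 0 < r) (hrM : r ≤ M) :
    g r ≤ g M / M ^ (g₀ - 1) * r ^ (g₀ - 1) := by
  have hM : 0 < M := lt_of_lt_of_le hr hrM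
  have h := aux_psi_mono hg (Set.mem_Ioi.2 hr) (Set.mem_Ioi.2 hM) hrM
  rw [div_le_iff₀ (Real.rpow_pos_of_pos hr _)] at h
  linarith [h]

set_option maxHeartbeats 1000000 in
lemma aux_core {g g' : ℝ → ℝ} {g₀ gS : ℝ} (hg₀ : 1 < g₀) (hle : g₀ ≤ gS)
    (hg : IsDensitySC g g' g₀ gS) {s c e : ℝ} (hs : 0 < s) (hce : c ^ 2 ≤ e * s)
    {q R h F Fd : ℝ → ℝ} {t₀ m : ℝ}
    (hqd : ∀ t, q t = s*t^2 + 2*c*t + e)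
    (hRd : ∀ t, R t = Real.sqrt (q t))
    (hhd : ∀ t, h t = g (R t) / R t)
    (hFdf : ∀ t, F t = g (R t) * (c + s*t) / R t)
    (hFdd : ∀ t, Fd t = g' (R t) * (c + s*t)^2 / q t + g (R t) / R t * (s - (c + s*t)^2 / q t))
    (ht₀ : t₀ = -c/s) (hm : m = min 1 (g₀ - 1)) :
    IntervalIntegrable h volume 0 1 ∧
      m * s * (∫ t in (0:ℝ)..1, h t) ≤ F 1 - F 0 := by
  obtain ⟨hg0, hpos, hderiv, hcontg', hSC⟩ := id hg
  have he : 0 ≤ e := by nlinarith [sq_nonneg c]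
  have hq_eq : ∀ t, q t = s*(t - t₀)^2 + (e - c^2/s) := by
    intro t; rw [hqd t, ht₀]; field_simp; ring
  have he' : 0 ≤ e - c^2/s := by rw [sub_nonneg, div_le_iff₀ hs]; linarith
  have hq_nonneg : ∀ t, 0 ≤ q t := by
    intro t; rw [hq_eq]; nlinarith [sq_nonneg (t - t₀)]
  have hq0 : ∀ t, q t = 0 → t = t₀ := by
    intro t ht
    have h1 := hq_eq t
    have h2 : (t - t₀)^2 ≤ 0 := by
      by_contra hcon
      push_neg at hcon
      have h3 := mul_pos hs hcon
      linarith
    have h3 : (t - t₀)^2 = 0 := le_antisymm h2 (sq_nonneg _)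
    have h4 : t - t₀ = 0 := pow_eq_zero_iff (two_ne_zero) |>.1 h3
    linarith
  have hu_sq : ∀ t, (c + s*t)^2 ≤ s * q t := by
    intro t; rw [hqd t]; nlinarith
  have hR_sq : ∀ t, R t ^ 2 = q t := by
    intro t; rw [hRd t]; exact Real.sq_sqrt (hq_nonneg t)
  have hR_nonneg : ∀ t, 0 ≤ R t := by
    intro t; rw [hRd t]; exact Real.sqrt_nonneg _
  have hRpos : ∀ t, 0 < q t → 0 < R t := by
    intro t ht; rw [hRd t]; exact Real.sqrt_pos.2 ht
  have hR0 : ∀ t, q t = 0 → R t = 0 := by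
    intro t ht; rw [hRd t, ht, Real.sqrt_zero]
  have hu0 : ∀ t, q t = 0 → c + s*t = 0 := by
    intro t ht
    have h1 := hu_sq t
    rw [ht, mul_zero] at h1
    nlinarith [sq_nonneg (c + s*t)]
  have hgR_nonneg : ∀ t, 0 ≤ g (R t) := by
    intro t
    rcases (hR_nonneg t).lt_or_eq with h1 | h1
    · exact (hpos _ h1).le
    · rw [← h1, hg0]
  have hqcont : Continuous q := by
    have hfun : q = fun t => s*t^2 + 2*c*t + e := funext hqd
    rw [hfun]; fun_prop
  have hcontR : Continuous R := by
    have hfun : R = fun t => Real.sqrt (q t) := funext hRd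
    rw [hfun]; exact Real.continuous_sqrt.comp hqcont
  -- derivative of F
  have hFderiv : ∀ t, 0 < q t → HasDerivAt F (Fd t) t := by
    intro t ht
    have hRt : 0 < R t := hRpos t ht
    have hq' : HasDerivAt q (2*(c + s*t)) t := by
      have hfun : q = fun u => s*u^2 + 2*c*u + e := funext hqd
      rw [hfun]
      have h1 : HasDerivAt (fun u : ℝ => s*u^2 + 2*c*u + e) (s*(2*t^1) + 2*c*1) t :=
        (((hasDerivAt_pow 2 t).const_mul s).add ((hasDerivAt_id t).const_mul (2*c))).add_const e
      convert h1 using 1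
      ring
    have hRne : R t ≠ 0 := ne_of_gt hRt
    have hRder : HasDerivAt R ((c + s*t) / R t) t := by
      have h2 := (Real.hasDerivAt_sqrt (ne_of_gt ht)).comp t hq'
      have h3 : HasDerivAt R (1 / (2 * Real.sqrt (q t)) * (2*(c + s*t))) t := by
        have hfun : R = fun u => Real.sqrt (q u) := funext hRd
        rw [hfun]; exact h2
      convert h3 using 1
      rw [hRd t]
      have hne : Real.sqrt (q t) ≠ 0 := ne_of_gt (Real.sqrt_pos.2 ht)
      field_simp
    have hgR : HasDerivAt (fun u => g (R u)) (g' (R t) * ((c + s*t) / R t)) t :=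
      (hderiv _ hRt).comp t hRder
    have hlin : HasDerivAt (fun u : ℝ => c + s*u) s t := by
      simpa using ((hasDerivAt_id t).const_mul s).const_add c
    have hnum : HasDerivAt (fun u => g (R u) * (c + s*u))
        (g' (R t) * ((c + s*t) / R t) * (c + s*t) + g (R t) * s) t := hgR.mul hlin
    have hdiv := hnum.div hRder (ne_of_gt hRt)
    have hfun : F = fun u => g (R u) * (c + s*u) / R u := funext hFdf
    rw [hfun]
    refine HasDerivAt.congr_deriv hdiv ?_
    have hqR : q t = R t ^ 2 := (hR_sq t).symm
    rw [hFdd t, hqR]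
    field_simp
    ring
  -- key pointwise inequality
  have hm1 : m ≤ 1 := hm ▸ min_le_left _ _
  have hm2 : m ≤ g₀ - 1 := hm ▸ min_le_right _ _
  have hm0 : 0 ≤ m := hm ▸ le_min zero_le_one (by linarith)
  have hkey : ∀ t, m * s * h t ≤ Fd t := by
    intro t
    rcases (hq_nonneg t).lt_or_eq with ht | ht
    · have hRt : 0 < R t := hRpos t ht
      have hgR := hpos _ hRt
      have hA1 : 0 ≤ (c + s*t)^2 / q t := div_nonneg (sq_nonneg _) ht.le
      have hA2 : (c + s*t)^2 / q t ≤ s := by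
        rw [div_le_iff₀ ht]; linarith [hu_sq t]
      have hg'low : (g₀ - 1) * h t ≤ g' (R t) := by
        rw [hhd t]
        have h1 := (hSC (R t) hRt).1
        have h2 : (g₀ - 1) * g (R t) ≤ R t * g' (R t) := by
          have h3 := mul_le_mul_of_nonneg_right h1 hgR.le
          rw [div_mul_cancel₀ _ (ne_of_gt hgR)] at h3
          linarith
        rw [← mul_div_assoc, div_le_iff₀ hRt]
        linarith
      have hh : 0 ≤ h t := by
        rw [hhd t]; exact div_nonneg hgR.le hRt.le
      have hexp : Fd t = g' (R t) * ((c + s*t)^2 / q t) + h t * (s - (c + s*t)^2 / q t) := by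
        rw [hFdd t, hhd t]; ring
      rw [hexp]
      nlinarith [mul_le_mul_of_nonneg_right hg'low hA1,
        mul_le_mul_of_nonneg_right hm2 (mul_nonneg hh hA1),
        mul_le_mul_of_nonneg_right hm1
          (mul_nonneg hh (by linarith : (0:ℝ) ≤ s - (c + s*t)^2 / q t))]
    · have ht' : q t = 0 := ht.symm
      have hh0 : h t = 0 := by rw [hhd t, hR0 t ht', hg0, zero_div]
      have hFd0 : Fd t = 0 := by
        rw [hFdd t, hR0 t ht', hu0 t ht', ht', hg0]
        norm_num
      rw [hh0, hFd0, mul_zero]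
  -- integrability of h
  have hQb : ∀ t ∈ Icc (0:ℝ) 1, q t ≤ s + 2*|c| + e := by
    rintro t ⟨h0, h1⟩
    rw [hqd t]
    have h2 : c*t ≤ |c| := by
      nlinarith [le_abs_self c, abs_nonneg c, mul_nonneg (sub_nonneg.2 (le_abs_self c)) h0,
        mul_le_of_le_one_right (abs_nonneg c) h1]
    nlinarith [mul_le_mul_of_nonneg_left (show t^2 ≤ 1 by nlinarith) hs.le]
  have hQpos : (0:ℝ) < s + 2*|c| + e := by
    have := abs_nonneg c; linarith
  have hM : 0 < Real.sqrt (s + 2*|c| + e) := Real.sqrt_pos.2 hQpos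
  set M := Real.sqrt (s + 2*|c| + e) with hMdef
  have hRM : ∀ t ∈ Icc (0:ℝ) 1, R t ≤ M := by
    intro t ht; rw [hRd t]; exact Real.sqrt_le_sqrt (hQb t ht)
  set K := g M / M ^ (g₀ - 1) with hKdef
  have hK0 : 0 ≤ K := div_nonneg (hpos M hM).le (Real.rpow_pos_of_pos hM _).le
  have hbound : ∀ x ∈ Icc (0:ℝ) 1, x ≠ t₀ →
      h x ≤ K * M ^ (g₀-2) + (K * Real.sqrt s ^ (g₀-2)) * |x - t₀| ^ (g₀-2) := by
    intro x hx hxne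
    have hqx : 0 < q x := by
      rcases (hq_nonneg x).lt_or_eq with h1 | h1
      · exact h1
      · exact absurd (hq0 x h1.symm) hxne
    have hRx : 0 < R x := hRpos x hqx
    have h1 : g (R x) ≤ K * R x ^ (g₀-1) := aux_g_bound hg hRx (hRM x hx)
    have h2 : h x ≤ K * R x ^ (g₀-2) := by
      rw [hhd x, div_le_iff₀ hRx]
      calc g (R x) ≤ K * R x ^ (g₀-1) := h1
        _ = K * R x ^ (g₀-2) * R x := by
            rw [mul_assoc, ← Real.rpow_add_one (ne_of_gt hRx) (g₀-2),
              show g₀ - 2 + 1 = g₀ - 1 by ring]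
    have hRlow : Real.sqrt s * |x - t₀| ≤ R x := by
      rw [hRd x]
      have h3 : s * (x - t₀)^2 ≤ q x := by rw [hq_eq x]; linarith
      calc Real.sqrt s * |x - t₀| = Real.sqrt (s * (x - t₀)^2) := by
            rw [Real.sqrt_mul hs.le, Real.sqrt_sq_eq_abs]
        _ ≤ Real.sqrt (q x) := Real.sqrt_le_sqrt h3
    have hRlow0 : 0 < Real.sqrt s * |x - t₀| :=
      mul_pos (Real.sqrt_pos.2 hs) (abs_pos.2 (sub_ne_zero.2 hxne))
    rcases le_total 0 (g₀ - 2) with hcase | hcase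
    · have h4 : R x ^ (g₀-2) ≤ M ^ (g₀-2) := Real.rpow_le_rpow hRx.le (hRM x hx) hcase
      have h5 : 0 ≤ (K * Real.sqrt s ^ (g₀-2)) * |x - t₀| ^ (g₀-2) := by positivity
      have h6 := mul_le_mul_of_nonneg_left h4 hK0
      linarith
    · have h4 : R x ^ (g₀-2) ≤ (Real.sqrt s * |x - t₀|) ^ (g₀-2) :=
        Real.rpow_le_rpow_of_nonpos hRlow0 hRlow hcase
      rw [Real.mul_rpow (Real.sqrt_nonneg s) (abs_nonneg _)] at h4
      have h5 : 0 ≤ K * M ^ (g₀-2) := by positivity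
      have h6 := mul_le_mul_of_nonneg_left h4 hK0
      rw [← mul_assoc] at h6
      linarith
  have hBint : IntervalIntegrable
      (fun x => K * M ^ (g₀-2) + (K * Real.sqrt s ^ (g₀-2)) * |x - t₀| ^ (g₀-2)) volume 0 1 :=
    intervalIntegrable_const.add ((aux_abs_rpow_int (by linarith) t₀ 0 1).const_mul _)
  have hUopen : IsOpen {t : ℝ | 0 < q t} := isOpen_lt continuous_const hqcont
  have hconth : ContinuousOn h {t : ℝ | 0 < q t} := by
    intro t ht
    have hRt : 0 < R t := hRpos t ht
    have hca : ContinuousAt h t := by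
      have hfun : h = fun x => g (R x) / R x := funext hhd
      rw [hfun]
      exact ((hderiv _ hRt).continuousAt.comp hcontR.continuousAt).div
        hcontR.continuousAt (ne_of_gt hRt)
    exact hca.continuousWithinAt
  have haeU : ∀ᵐ x : ℝ, x ∈ {t : ℝ | 0 < q t} := by
    rw [MeasureTheory.ae_iff]
    refine measure_mono_null ?_ (measure_singleton t₀)
    intro x hx
    simp only [mem_setOf_eq, not_lt] at hx
    exact mem_singleton_iff.2 (hq0 x (le_antisymm hx (hq_nonneg x)))
  have hmeas : AEStronglyMeasurable h (volume.restrict (Set.uIoc (0:ℝ) 1)) := by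
    have h1 : AEMeasurable h (volume.restrict {t : ℝ | 0 < q t}) :=
      hconth.aemeasurable hUopen.measurableSet
    rw [Measure.restrict_eq_self_of_ae_mem haeU] at h1
    exact (h1.restrict).aestronglyMeasurable
  have hae_ne : ∀ᵐ x : ℝ, x ≠ t₀ := by
    rw [MeasureTheory.ae_iff]
    refine measure_mono_null ?_ (measure_singleton t₀)
    intro x hx
    simp only [mem_setOf_eq, not_not] at hx
    exact hx
  have hint : IntervalIntegrable h volume 0 1 := by
    rw [intervalIntegrable_iff]
    refine Integrable.mono' (intervalIntegrable_iff.1 hBint) hmeas ?_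
    filter_upwards [ae_restrict_mem measurableSet_uIoc, ae_restrict_of_ae hae_ne]
      with x hx hxne
    have hx' : x ∈ Icc (0:ℝ) 1 := by
      rw [uIoc_of_le zero_le_one] at hx; exact ⟨hx.1.le, hx.2⟩
    have hnn : 0 ≤ h x := by rw [hhd x]; exact div_nonneg (hgR_nonneg x) (hR_nonneg x)
    rw [Real.norm_eq_abs, abs_of_nonneg hnn]
    exact hbound x hx' hxne
  -- continuity of F
  have hFcontAt : ∀ t, ContinuousAt F t := by
    intro t
    rcases (hq_nonneg t).lt_or_eq with ht | ht
    · exact (hFderiv t ht).continuousAt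
    · have ht' : q t = 0 := ht.symm
      have hzero : e - c^2/s = 0 := by
        have h1 := hq_eq t
        nlinarith [mul_nonneg hs.le (sq_nonneg (t - t₀))]
      have hFt : F t = 0 := by rw [hFdf t, hR0 t ht', hu0 t ht']; simp
      have hFbd : ∀ x, ‖F x‖ ≤ Real.sqrt s * g (R x) := by
        intro x
        rcases (hq_nonneg x).lt_or_eq with hx | hx
        · have hRx := hRpos x hx
          rw [hFdf x, Real.norm_eq_abs, abs_div, abs_mul, abs_of_nonneg (hgR_nonneg x),
            abs_of_nonneg (hR_nonneg x), div_le_iff₀ hRx]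
          have h5 : |c + s*x| ≤ Real.sqrt s * R x := by
            have h6 : (c + s*x)^2 ≤ (Real.sqrt s * R x)^2 := by
              rw [mul_pow, Real.sq_sqrt hs.le, hR_sq x]; exact hu_sq x
            calc |c + s*x| = Real.sqrt ((c + s*x)^2) := (Real.sqrt_sq_eq_abs _).symm
              _ ≤ Real.sqrt ((Real.sqrt s * R x)^2) := Real.sqrt_le_sqrt h6
              _ = Real.sqrt s * R x := Real.sqrt_sq (by positivity)
          calc g (R x) * |c + s*x| ≤ g (R x) * (Real.sqrt s * R x) :=
                mul_le_mul_of_nonneg_left h5 (hgR_nonneg x)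
            _ = Real.sqrt s * g (R x) * R x := by ring
        · have hx' : q x = 0 := hx.symm
          rw [hFdf x, hR0 x hx', hu0 x hx']
          simp [hg0]
      have hsq : 0 < Real.sqrt s := Real.sqrt_pos.2 hs
      set K' := g (Real.sqrt s) / (Real.sqrt s) ^ (g₀ - 1) with hK'def
      have hK'0 : 0 ≤ K' := div_nonneg (hpos _ hsq).le (Real.rpow_pos_of_pos hsq _).le
      have hqq : ∀ x, q x = s * (x - t₀)^2 := by
        intro x; rw [hq_eq x, hzero, add_zero]
      have htt₀ : t = t₀ := hq0 t ht'
      rw [ContinuousAt, hFt]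
      apply squeeze_zero_norm' (a := fun x => Real.sqrt s * (K' * R x ^ (g₀ - 1)))
      · have hball : ∀ᶠ x in nhds t, dist x t < 1 :=
          Metric.eventually_nhds_iff.2 ⟨1, one_pos, fun {y} hy => hy⟩
        filter_upwards [hball] with x hx
        have hRxle : R x ≤ Real.sqrt s := by
          rw [hRd x, hqq x]
          calc Real.sqrt (s * (x - t₀)^2) = Real.sqrt s * |x - t₀| := by
                rw [Real.sqrt_mul hs.le, Real.sqrt_sq_eq_abs]
            _ ≤ Real.sqrt s * 1 := by
                apply mul_le_mul_of_nonneg_left _ (Real.sqrt_nonneg s)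
                have hx' : |x - t| < 1 := by rwa [Real.dist_eq] at hx
                rw [← htt₀]
                exact hx'.le
            _ = Real.sqrt s := mul_one _
        have hgbd : g (R x) ≤ K' * R x ^ (g₀ - 1) := by
          rcases (hR_nonneg x).lt_or_eq with hRx | hRx
          · exact aux_g_bound hg hRx hRxle
          · rw [← hRx, hg0, Real.zero_rpow (by linarith : g₀ - 1 ≠ 0), mul_zero]
        calc ‖F x‖ ≤ Real.sqrt s * g (R x) := hFbd x
          _ ≤ Real.sqrt s * (K' * R x ^ (g₀ - 1)) :=
              mul_le_mul_of_nonneg_left hgbd (Real.sqrt_nonneg s)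
      · have hRt0 : R t = 0 := hR0 t ht'
        have hc1 : ContinuousAt (fun x => Real.sqrt s * (K' * R x ^ (g₀ - 1))) t := by
          apply ContinuousAt.mul continuousAt_const
          apply ContinuousAt.mul continuousAt_const
          exact (Real.continuousAt_rpow_const (R t) (g₀ - 1)
            (Or.inr (by linarith))).comp hcontR.continuousAt
        have h7 := hc1.tendsto
        simpa [hRt0, Real.zero_rpow (by linarith : g₀ - 1 ≠ 0)] using h7
  -- FTC on the two subintervals
  obtain ⟨τ, hτ⟩ : ∃ τ : ℝ, τ = max 0 (min 1 t₀) := ⟨_, rfl⟩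
  have hτ0 : 0 ≤ τ := hτ ▸ le_max_left _ _
  have hτ1 : τ ≤ 1 := hτ ▸ max_le zero_le_one (min_le_left _ _)
  have hpos1 : ∀ x ∈ Ioo (0:ℝ) τ, 0 < q x := by
    intro x hx
    rcases (hq_nonneg x).lt_or_eq with h1 | h1
    · exact h1
    · exfalso
      have hxt : x = t₀ := hq0 x h1.symm
      rw [hxt] at hx
      have h2 : τ ≤ t₀ := hτ ▸ max_le hx.1.le (min_le_right _ _)
      linarith [hx.2]
  have hpos2 : ∀ x ∈ Ioo τ (1:ℝ), 0 < q x := by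
    intro x hx
    rcases (hq_nonneg x).lt_or_eq with h1 | h1
    · exact h1
    · exfalso
      have hxt : x = t₀ := hq0 x h1.symm
      rw [hxt] at hx
      have h2 : t₀ ≤ τ := hτ ▸ le_max_of_le_right (le_min hx.2.le le_rfl)
      linarith [hx.1]
  have hFcont : ContinuousOn F (Icc (0:ℝ) 1) := fun x _ => (hFcontAt x).continuousWithinAt
  have hmsint : IntervalIntegrable (fun x => m * s * h x) volume 0 1 := hint.const_mul _
  have hsub1 : IntervalIntegrable (fun x => m * s * h x) volume 0 τ :=
    hmsint.mono_set (by
      rw [uIcc_of_le hτ0, uIcc_of_le zero_le_one]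
      exact Icc_subset_Icc le_rfl hτ1)
  have hsub2 : IntervalIntegrable (fun x => m * s * h x) volume τ 1 :=
    hmsint.mono_set (by
      rw [uIcc_of_le hτ1, uIcc_of_le zero_le_one]
      exact Icc_subset_Icc hτ0 le_rfl)
  have I1 : (∫ x in (0:ℝ)..τ, m * s * h x) ≤ F τ - F 0 :=
    intervalIntegral.integral_le_sub_of_hasDeriv_right_of_le hτ0
      (hFcont.mono (Icc_subset_Icc le_rfl hτ1))
      (fun x hx => (hFderiv x (hpos1 x hx)).hasDerivWithinAt)
      ((intervalIntegrable_iff_integrableOn_Icc_of_le hτ0).1 hsub1)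
      (fun x _ => hkey x)
  have I2 : (∫ x in τ..(1:ℝ), m * s * h x) ≤ F 1 - F τ :=
    intervalIntegral.integral_le_sub_of_hasDeriv_right_of_le hτ1
      (hFcont.mono (Icc_subset_Icc hτ0 le_rfl))
      (fun x hx => (hFderiv x (hpos2 x hx)).hasDerivWithinAt)
      ((intervalIntegrable_iff_integrableOn_Icc_of_le hτ1).1 hsub2)
      (fun x _ => hkey x)
  have hadd : (∫ x in (0:ℝ)..τ, m * s * h x) + (∫ x in τ..(1:ℝ), m * s * h x)
      = ∫ x in (0:ℝ)..1, m * s * h x :=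
    intervalIntegral.integral_add_adjacent_intervals hsub1 hsub2
  refine ⟨hint, ?_⟩
  calc m * s * ∫ t in (0:ℝ)..1, h t = ∫ x in (0:ℝ)..1, m * s * h x :=
        (intervalIntegral.integral_const_mul _ _).symm
    _ = (∫ x in (0:ℝ)..τ, m * s * h x) + (∫ x in τ..(1:ℝ), m * s * h x) := hadd.symm
    _ ≤ (F τ - F 0) + (F 1 - F τ) := add_le_add I1 I2
    _ = F 1 - F 0 := by ring

/-- strong monotonicity inequality for
`a(ξ) = (g(‖ξ‖)/‖ξ‖)·ξ` (with `a(0) = 0`): for `ξ ≠ η` and `θ_t = tξ + (1−t)η`,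
the function `t ↦ g(‖θ_t‖)/‖θ_t‖` is integrable on `[0,1]` and
`⟨a(ξ) − a(η), ξ − η⟩ ≥ min(1, g₀−1)·‖ξ − η‖²·∫₀¹ g(‖θ_t‖)/‖θ_t‖ dt`. -/
theorem stmt_15 (g g' : ℝ → ℝ) (g₀ gS : ℝ) (hg₀ : 1 < g₀) (hle : g₀ ≤ gS)
    (hg : IsDensitySC g g' g₀ gS) (N : ℕ) (hN : 1 ≤ N)
    (a : EuclideanSpace ℝ (Fin N) → EuclideanSpace ℝ (Fin N))
    (ha : ∀ ξ, a ξ = (g ‖ξ‖ / ‖ξ‖) • ξ)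
    (ξ η : EuclideanSpace ℝ (Fin N)) (hne : ξ ≠ η) :
    IntervalIntegrable
        (fun t : ℝ => g ‖t • ξ + (1 - t) • η‖ / ‖t • ξ + (1 - t) • η‖)
        volume 0 1 ∧
      min 1 (g₀ - 1) * ‖ξ - η‖ ^ 2 *
          (∫ t in (0:ℝ)..1, g ‖t • ξ + (1 - t) • η‖ / ‖t • ξ + (1 - t) • η‖)
        ≤ (inner ℝ (a ξ - a η) (ξ - η) : ℝ) := by
  have hv : ξ - η ≠ 0 := sub_ne_zero.2 hne
  have hvn : (0:ℝ) < ‖ξ - η‖ := norm_pos_iff.2 hv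
  have hs : (0:ℝ) < ‖ξ - η‖ ^ 2 := by positivity
  have hce : (inner ℝ η (ξ - η) : ℝ) ^ 2 ≤ ‖η‖ ^ 2 * ‖ξ - η‖ ^ 2 := by
    have h1 := abs_real_inner_le_norm η (ξ - η)
    have h2 := mul_self_le_mul_self (abs_nonneg (inner ℝ η (ξ - η) : ℝ)) h1
    have h3 := sq_abs (inner ℝ η (ξ - η) : ℝ)
    nlinarith
  have hθ : ∀ t : ℝ, t • ξ + (1 - t) • η = η + t • (ξ - η) := by
    intro t
    rw [sub_smul, one_smul, smul_sub]
    abel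
  have hnorm_sq : ∀ t : ℝ, ‖t • ξ + (1 - t) • η‖ ^ 2
      = ‖ξ - η‖ ^ 2 * t ^ 2 + 2 * (inner ℝ η (ξ - η) : ℝ) * t + ‖η‖ ^ 2 := by
    intro t
    rw [hθ t, norm_add_sq_real, real_inner_smul_right, norm_smul, mul_pow,
      Real.norm_eq_abs, sq_abs]
    ring
  have hnorm : ∀ t : ℝ, ‖t • ξ + (1 - t) • η‖
      = Real.sqrt (‖ξ - η‖ ^ 2 * t ^ 2 + 2 * (inner ℝ η (ξ - η) : ℝ) * t + ‖η‖ ^ 2) := by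
    intro t
    rw [← hnorm_sq t, Real.sqrt_sq (norm_nonneg _)]
  obtain ⟨Hint, Hineq⟩ := aux_core hg₀ hle hg
    (s := ‖ξ - η‖ ^ 2) (c := (inner ℝ η (ξ - η) : ℝ)) (e := ‖η‖ ^ 2) hs hce
    (q := fun t => ‖ξ - η‖ ^ 2 * t ^ 2 + 2 * (inner ℝ η (ξ - η) : ℝ) * t + ‖η‖ ^ 2)
    (R := fun t => ‖t • ξ + (1 - t) • η‖)
    (h := fun t : ℝ => g ‖t • ξ + (1 - t) • η‖ / ‖t • ξ + (1 - t) • η‖)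
    (F := fun t : ℝ => g ‖t • ξ + (1 - t) • η‖ *
        ((inner ℝ η (ξ - η) : ℝ) + ‖ξ - η‖ ^ 2 * t) / ‖t • ξ + (1 - t) • η‖)
    (Fd := fun t : ℝ => g' ‖t • ξ + (1 - t) • η‖ *
        ((inner ℝ η (ξ - η) : ℝ) + ‖ξ - η‖ ^ 2 * t) ^ 2 /
          (‖ξ - η‖ ^ 2 * t ^ 2 + 2 * (inner ℝ η (ξ - η) : ℝ) * t + ‖η‖ ^ 2) +
        g ‖t • ξ + (1 - t) • η‖ / ‖t • ξ + (1 - t) • η‖ *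
          (‖ξ - η‖ ^ 2 - ((inner ℝ η (ξ - η) : ℝ) + ‖ξ - η‖ ^ 2 * t) ^ 2 /
            (‖ξ - η‖ ^ 2 * t ^ 2 + 2 * (inner ℝ η (ξ - η) : ℝ) * t + ‖η‖ ^ 2)))
    (t₀ := -(inner ℝ η (ξ - η) : ℝ) / ‖ξ - η‖ ^ 2) (m := min 1 (g₀ - 1))
    (fun t => rfl) hnorm (fun t => rfl) (fun t => rfl) (fun t => rfl) (by ring) rfl
  refine ⟨Hint, ?_⟩
  -- identify F 1 - F 0 with the inner product
  have hR1 : ‖(1:ℝ) • ξ + (1 - (1:ℝ)) • η‖ = ‖ξ‖ := by norm_num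
  have hR0 : ‖(0:ℝ) • ξ + (1 - (0:ℝ)) • η‖ = ‖η‖ := by norm_num
  have hξv : (inner ℝ ξ (ξ - η) : ℝ) = (inner ℝ η (ξ - η) : ℝ) + ‖ξ - η‖ ^ 2 := by
    have h1 : (inner ℝ (ξ - η) (ξ - η) : ℝ) = ‖ξ - η‖ ^ 2 := real_inner_self_eq_norm_sq _
    have h2 : (inner ℝ (ξ - η) (ξ - η) : ℝ) = (inner ℝ ξ (ξ - η) : ℝ) - (inner ℝ η (ξ - η) : ℝ) :=
      inner_sub_left _ _ _
    linarith
  have e1 : (inner ℝ (a ξ) (ξ - η) : ℝ) = g ‖ξ‖ / ‖ξ‖ * (inner ℝ ξ (ξ - η) : ℝ) := by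
    rw [ha ξ, real_inner_smul_left]
  have e2 : (inner ℝ (a η) (ξ - η) : ℝ) = g ‖η‖ / ‖η‖ * (inner ℝ η (ξ - η) : ℝ) := by
    rw [ha η, real_inner_smul_left]
  have hFinal : (inner ℝ (a ξ - a η) (ξ - η) : ℝ)
      = g ‖(1:ℝ) • ξ + (1 - (1:ℝ)) • η‖ *
          ((inner ℝ η (ξ - η) : ℝ) + ‖ξ - η‖ ^ 2 * 1) / ‖(1:ℝ) • ξ + (1 - (1:ℝ)) • η‖
        - g ‖(0:ℝ) • ξ + (1 - (0:ℝ)) • η‖ *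
          ((inner ℝ η (ξ - η) : ℝ) + ‖ξ - η‖ ^ 2 * 0) / ‖(0:ℝ) • ξ + (1 - (0:ℝ)) • η‖ := by
    rw [inner_sub_left, e1, e2, hR1, hR0, hξv]
    ring
  rw [hFinal]
  exact Hineq
end

section
/- Let g be a density satisfying (SC) with constants 1 < g₀ ≤ g⁰, let G(t) = ∫₀ᵗ g(s) ds, let N ≥ 1, and for ξ ∈ ℝ^N define a(ξ) = (g(‖ξ‖)/‖ξ‖)·ξ for ξ ≠ 0 and a(0) = 0. Then there exists a constant c > 0 depending only on g₀ and g⁰ such that for all ξ, η ∈ ℝ^N with ‖ξ − η‖ > 2‖ξ‖ one has ⟨a(ξ) − a(η), ξ − η⟩ ≥ c·G(‖ξ − η‖). -/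
lemma sc_mono {g g' : ℝ → ℝ} {p q : ℝ} (hp : 1 < p) (h : IsDensitySC g g' p q) :
    ∀ s t : ℝ, 0 ≤ s → s ≤ t → g s ≤ g t := by
  obtain ⟨h0, hpos, hder, -, hsc⟩ := h
  intro s t hs hst
  rcases eq_or_lt_of_le hs with hs0 | hs0
  · rw [← hs0, h0]
    rcases eq_or_lt_of_le (hs0.le.trans hst) with ht0 | ht0
    · rw [← ht0, h0]
    · exact (hpos t ht0).le
  · have hmono : MonotoneOn g (Set.Ici s) := by
      apply monotoneOn_of_deriv_nonneg (convex_Ici s)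
      · intro u hu
        exact ((hder u (lt_of_lt_of_le hs0 hu)).continuousAt).continuousWithinAt
      · intro u hu
        rw [interior_Ici] at hu
        exact ((hder u (hs0.trans hu)).differentiableAt).differentiableWithinAt
      · intro u hu
        rw [interior_Ici] at hu
        have hu0 : 0 < u := hs0.trans hu
        rw [(hder u hu0).deriv]
        have hgu := hpos u hu0
        have := (hsc u hu0).1
        rw [le_div_iff₀ hgu] at this
        nlinarith
    exact hmono Set.self_mem_Ici hst hst

lemma sc_ratio_lower {g g' : ℝ → ℝ} {p q : ℝ} (hp : 1 < p) (h : IsDensitySC g g' p q)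
    {s l : ℝ} (hs : 0 < s) (hl : 1 ≤ l) : l ^ (p - 1) * g s ≤ g (l * s) := by
  obtain ⟨h0, hpos, hder, -, hsc⟩ := h
  set e : ℝ := -(p - 1) with he
  have hmono : MonotoneOn (fun u => g u * u ^ e) (Set.Ici s) := by
    apply monotoneOn_of_deriv_nonneg (convex_Ici s)
    · intro u hu
      have hu0 : 0 < u := lt_of_lt_of_le hs hu
      exact (((hder u hu0).continuousAt).mul
        ((Real.continuousAt_rpow_const u e (Or.inl hu0.ne')))).continuousWithinAt
    · intro u hu
      rw [interior_Ici] at hu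
      have hu0 : 0 < u := hs.trans hu
      exact (((hder u hu0).mul
        (Real.hasDerivAt_rpow_const (Or.inl hu0.ne'))).differentiableAt).differentiableWithinAt
    · intro u hu
      rw [interior_Ici] at hu
      have hu0 : 0 < u := hs.trans hu
      have hD := (hder u hu0).mul (Real.hasDerivAt_rpow_const (p := e) (Or.inl hu0.ne'))
      rw [show deriv (fun u => g u * u ^ e) u = _ from hD.deriv]
      have hgu := hpos u hu0
      have hkey := (hsc u hu0).1
      rw [le_div_iff₀ hgu] at hkey
      have hne : (1:ℝ) + (e - 1) ≠ 0 := by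
        rw [he]; intro hcon; nlinarith
      have hsplit : u ^ e = u * u ^ (e - 1) := by
        nth_rewrite 1 [show e = 1 + (e - 1) by ring]
        rw [Real.rpow_one_add' hu0.le hne]
      have hrw : g' u * u ^ e + g u * (e * u ^ (e - 1))
          = u ^ (e - 1) * (u * g' u - (p - 1) * g u) := by
        rw [hsplit, he]; ring
      rw [hrw]
      exact mul_nonneg (Real.rpow_nonneg hu0.le _) (by nlinarith)
  have hfs : g s * s ^ e ≤ g (l * s) * (l * s) ^ e := by
    have := hmono Set.self_mem_Ici (by nlinarith : s ≤ l * s) (by nlinarith)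
    simpa using this
  have hls : (0:ℝ) < l * s := by nlinarith
  have hexp : (l * s) ^ e = l ^ e * s ^ e := Real.mul_rpow (by linarith) hs.le
  rw [hexp] at hfs
  have hse : (0:ℝ) < s ^ e := Real.rpow_pos_of_pos hs e
  have hle : (0:ℝ) < l ^ e := Real.rpow_pos_of_pos (by linarith) e
  -- from g s * s^e ≤ g(ls) * l^e * s^e, divide by s^e: g s ≤ g(ls) * l^e
  have h1 : g s ≤ g (l * s) * l ^ e := by
    have := (mul_le_mul_iff_of_pos_right hse).mp (by linarith [hfs] : g s * s ^ e ≤ (g (l * s) * l ^ e) * s ^ e)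
    exact this
  have h2 : l ^ (p - 1) * l ^ e = 1 := by
    rw [← Real.rpow_add (by linarith), he]; simp
  calc l ^ (p - 1) * g s ≤ l ^ (p - 1) * (g (l * s) * l ^ e) := by
        apply mul_le_mul_of_nonneg_left h1 (Real.rpow_nonneg (by linarith) _)
    _ = g (l * s) * (l ^ (p - 1) * l ^ e) := by ring
    _ = g (l * s) := by rw [h2, mul_one]

lemma sc_ratio_upper {g g' : ℝ → ℝ} {p q : ℝ} (hp : 1 < p) (hpq : p ≤ q)
    (h : IsDensitySC g g' p q)
    {s l : ℝ} (hs : 0 < s) (hl : 1 ≤ l) : g (l * s) ≤ l ^ (q - 1) * g s := by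
  obtain ⟨h0, hpos, hder, -, hsc⟩ := h
  have hq : 1 < q := lt_of_lt_of_le hp hpq
  set e : ℝ := -(q - 1) with he
  have hmono : AntitoneOn (fun u => g u * u ^ e) (Set.Ici s) := by
    apply antitoneOn_of_deriv_nonpos (convex_Ici s)
    · intro u hu
      have hu0 : 0 < u := lt_of_lt_of_le hs hu
      exact (((hder u hu0).continuousAt).mul
        ((Real.continuousAt_rpow_const u e (Or.inl hu0.ne')))).continuousWithinAt
    · intro u hu
      rw [interior_Ici] at hu
      have hu0 : 0 < u := hs.trans hu
      exact (((hder u hu0).mul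
        (Real.hasDerivAt_rpow_const (Or.inl hu0.ne'))).differentiableAt).differentiableWithinAt
    · intro u hu
      rw [interior_Ici] at hu
      have hu0 : 0 < u := hs.trans hu
      have hD := (hder u hu0).mul (Real.hasDerivAt_rpow_const (p := e) (Or.inl hu0.ne'))
      rw [show deriv (fun u => g u * u ^ e) u = _ from hD.deriv]
      have hgu := hpos u hu0
      have hkey := (hsc u hu0).2
      rw [div_le_iff₀ hgu] at hkey
      have hne : (1:ℝ) + (e - 1) ≠ 0 := by
        rw [he]; intro hcon; nlinarith
      have hsplit : u ^ e = u * u ^ (e - 1) := by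
        nth_rewrite 1 [show e = 1 + (e - 1) by ring]
        rw [Real.rpow_one_add' hu0.le hne]
      have hrw : g' u * u ^ e + g u * (e * u ^ (e - 1))
          = u ^ (e - 1) * (u * g' u - (q - 1) * g u) := by
        rw [hsplit, he]; ring
      rw [hrw]
      exact mul_nonpos_of_nonneg_of_nonpos (Real.rpow_nonneg hu0.le _) (by nlinarith)
  have hfs : g (l * s) * (l * s) ^ e ≤ g s * s ^ e := by
    have := hmono Set.self_mem_Ici (by nlinarith : s ≤ l * s) (by nlinarith)
    simpa using this
  have hexp : (l * s) ^ e = l ^ e * s ^ e := Real.mul_rpow (by linarith) hs.le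
  rw [hexp] at hfs
  have hse : (0:ℝ) < s ^ e := Real.rpow_pos_of_pos hs e
  have hle : (0:ℝ) < l ^ e := Real.rpow_pos_of_pos (by linarith) e
  have h1 : g (l * s) * l ^ e ≤ g s := by
    have := (mul_le_mul_iff_of_pos_right hse).mp (by linarith [hfs] : (g (l * s) * l ^ e) * s ^ e ≤ g s * s ^ e)
    exact this
  have h2 : l ^ (q - 1) * l ^ e = 1 := by
    rw [← Real.rpow_add (by linarith), he]; simp
  calc g (l * s) = g (l * s) * (l ^ e * l ^ (q - 1)) := by
        rw [show l ^ e * l ^ (q-1) = l ^ (q-1) * l ^ e by ring, h2, mul_one]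
    _ = l ^ (q - 1) * (g (l * s) * l ^ e) := by ring
    _ ≤ l ^ (q - 1) * g s := by
        apply mul_le_mul_of_nonneg_left h1 (Real.rpow_nonneg (by linarith) _)

set_option maxHeartbeats 2000000 in
lemma sc_core {g g' : ℝ → ℝ} {p q : ℝ} (hp : 1 < p) (hpq : p ≤ q) (h : IsDensitySC g g' p q)
    {r x y c : ℝ} (hr : 0 < r) (hx : 0 ≤ x) (hy : 0 ≤ y) (hxr : 2 * x < r)
    (hc : |c| ≤ x * y) (hr2 : r ^ 2 = x ^ 2 + y ^ 2 - 2 * c) :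
    min (1/3 : ℝ) (((3/2:ℝ) ^ (p - 1) - 1) / 4) * g (r / 8) * r ≤
      (g x / x) * x ^ 2 + (g y / y) * y ^ 2 - (g x / x + g y / y) * c := by
  have hpos := h.2.1
  have h0 := h.1
  obtain ⟨hc1, hc2⟩ := abs_le.mp hc
  set κ : ℝ := (3/2:ℝ) ^ (p - 1) - 1 with hκdef
  have hκpos : 0 < κ := by
    have : (3/2:ℝ) ^ (0:ℝ) < (3/2:ℝ) ^ (p - 1) := by
      rw [Real.rpow_lt_rpow_left_iff (by norm_num : (1:ℝ) < 3/2)]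
      linarith
    rw [Real.rpow_zero] at this
    simp only [hκdef]; linarith
  set m : ℝ := min (1/3 : ℝ) (κ / 4) with hmdef
  have hm1 : m ≤ 1/3 := min_le_left _ _
  have hm2 : m ≤ κ / 4 := min_le_right _ _
  have hm0 : 0 < m := lt_min (by norm_num) (div_pos hκpos (by norm_num))
  have hg8 : 0 < g (r / 8) := hpos _ (by linarith)
  have hgr : 0 < g r := hpos _ hr
  have hyx : r ≤ x + y := by nlinarith [sq_nonneg (x + y - r), sq_nonneg (x + y + r)]
  have hy2 : r / 2 < y := by linarith
  have hy3 : y ≤ r + x := by nlinarith [sq_nonneg (y - x - r)]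
  have hgy : 0 < g y := hpos y (by linarith)
  have hmono := sc_mono hp h
  have hg82 : g (r / 8) ≤ g (r / 2) := hmono _ _ (by linarith) (by linarith)
  rcases eq_or_lt_of_le hx with hx0 | hx0
  · -- x = 0
    have hx0' : x = 0 := hx0.symm
    have hc0 : c = 0 := by
      rw [hx0'] at hc; simpa using hc
    have hyr : y = r := by nlinarith
    rw [hx0', hc0, h0, hyr]
    have hexp : g r / r * r ^ 2 = g r * r := by field_simp
    simp only [mul_zero, sub_zero, zero_div, zero_mul, zero_add, hexp]
    have hg8r : g (r / 8) ≤ g r := hmono _ _ (by linarith) (by linarith)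
    nlinarith [mul_le_mul_of_nonneg_right hm1 (mul_nonneg hg8.le hr.le),
      mul_le_mul_of_nonneg_right hg8r hr.le]
  · -- x > 0
    set a : ℝ := g x / x with hadef
    set b : ℝ := g y / y with hbdef
    have hgx : 0 < g x := hpos x hx0
    have ha : a * x = g x := div_mul_cancel₀ _ hx0.ne'
    have hb : b * y = g y := div_mul_cancel₀ _ (by linarith : (0:ℝ) < y).ne'
    have ha0 : 0 < a := div_pos hgx hx0
    have hb0 : 0 < b := div_pos hgy (by linarith)
    have hc' : c = (x ^ 2 + y ^ 2 - r ^ 2) / 2 := by linarith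
    have hId : a * x ^ 2 + b * y ^ 2 - (a + b) * c
        = a * (r ^ 2 + x ^ 2 - y ^ 2) / 2 + b * (r ^ 2 + y ^ 2 - x ^ 2) / 2 := by
      rw [hc']; ring
    rcases le_or_gt (y ^ 2 - x ^ 2) (r ^ 2 / 2) with hD | hD
    · -- Case A
      have hgy2 : g (r / 2) ≤ g y := hmono _ _ (by linarith) (by linarith)
      have T1 : 0 ≤ a * (r ^ 2 + x ^ 2 - y ^ 2) := mul_nonneg ha0.le (by nlinarith)
      have T2 : g (r / 2) * r / 3 ≤ b * (r ^ 2 + y ^ 2 - x ^ 2) / 2 := by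
        have hbr : g (r / 2) * r / 3 ≤ b * r ^ 2 / 2 := by
          have hbeq : b * r ^ 2 / 2 = g y * r ^ 2 / (2 * y) := by
            rw [hbdef]; ring
          rw [hbeq, div_le_div_iff₀ (by norm_num) (by linarith)]
          have e1 : g (r / 2) * (2 * y) ≤ g (r / 2) * (3 * r) :=
            mul_le_mul_of_nonneg_left (by linarith) (hpos _ (by linarith)).le
          have e2 : g (r / 2) * (3 * r) ≤ g y * (3 * r) :=
            mul_le_mul_of_nonneg_right hgy2 (by linarith)
          nlinarith [mul_le_mul_of_nonneg_left (e1.trans e2) hr.le]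
        have hyx0 : 0 ≤ y ^ 2 - x ^ 2 := by nlinarith
        nlinarith
      rw [hId]
      have hfin : m * g (r / 8) * r ≤ g (r / 2) * r / 3 := by
        nlinarith [mul_le_mul_of_nonneg_right hm1 (mul_nonneg hg8.le hr.le),
          mul_le_mul_of_nonneg_right hg82 hr.le]
      linarith
    · -- Case B
      have hxy2 : x + y < 2 * r := by linarith
      have hyx4 : r / 4 ≤ y - x := by
        by_contra hcon
        push_neg at hcon
        have h1 : (y - x) * (x + y) ≤ (r / 4) * (2 * r) := by
          apply mul_le_mul hcon.le hxy2.le (by linarith) (by linarith)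
        nlinarith
      have hId2 : a * x ^ 2 + b * y ^ 2 - (a + b) * c - (g y - g x) * (y - x)
          = (a + b) * (x * y - c) := by
        have e1 : g y = b * y := hb.symm
        have e2 : g x = a * x := ha.symm
        rw [e1, e2]; ring
      have hmono' : (g y - g x) * (y - x) ≤ a * x ^ 2 + b * y ^ 2 - (a + b) * c := by
        nlinarith [mul_nonneg (by linarith : (0:ℝ) ≤ a + b) (by linarith : (0:ℝ) ≤ x * y - c)]
      have hκg : κ * g (r / 8) ≤ g y - g x := by
        rcases le_or_gt x (r / 8) with hx8 | hx8
        · have hgx8 : g x ≤ g (r / 8) := hmono _ _ hx hx8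
          have hrl := sc_ratio_lower hp h (by linarith : (0:ℝ) < r / 8) (by norm_num : (1:ℝ) ≤ 4)
          rw [show (4:ℝ) * (r / 8) = r / 2 by ring] at hrl
          have hgy2 : g (r / 2) ≤ g y := hmono _ _ (by linarith) (by linarith)
          have hexp : (3/2:ℝ) ^ (p - 1) ≤ (4:ℝ) ^ (p - 1) :=
            Real.rpow_le_rpow (by norm_num) (by norm_num) (by linarith)
          nlinarith
        · have hgx8 : g (r / 8) ≤ g x := hmono _ _ (by linarith) hx8.le
          have hy32 : (3/2) * x ≤ y := by linarith
          have hrl := sc_ratio_lower hp h hx0 (by norm_num : (1:ℝ) ≤ 3/2)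
          have hgy2 : g ((3/2) * x) ≤ g y := hmono _ _ (by nlinarith) hy32
          nlinarith
      have hfin : (κ * g (r / 8)) * (r / 4) ≤ (g y - g x) * (y - x) := by
        apply mul_le_mul hκg hyx4 (by linarith) (by nlinarith)
      nlinarith [mul_le_mul_of_nonneg_right hm2 (mul_nonneg hg8.le hr.le)]

/-- there is a constant `c > 0` depending only on `g₀` and `g⁰`
such that for every density `g` satisfying (SC) with these constants, every
`N ≥ 1` and all `ξ, η ∈ ℝ^N` with `‖ξ − η‖ > 2‖ξ‖`,
`⟨a(ξ) − a(η), ξ − η⟩ ≥ c·G(‖ξ − η‖)`, where `a(ζ) = (g(‖ζ‖)/‖ζ‖)·ζ`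
and `G(t) = ∫₀ᵗ g(s) ds`. -/
theorem stmt_17 (g₀ gS : ℝ) (hg₀ : 1 < g₀) (hle : g₀ ≤ gS) :
    ∃ c : ℝ, 0 < c ∧ ∀ g g' : ℝ → ℝ, IsDensitySC g g' g₀ gS →
      ∀ N : ℕ, 1 ≤ N → ∀ ξ η : EuclideanSpace ℝ (Fin N),
        2 * ‖ξ‖ < ‖ξ - η‖ →
        c * ∫ s in (0:ℝ)..‖ξ - η‖, g s ≤
          (inner ℝ ((g ‖ξ‖ / ‖ξ‖) • ξ - (g ‖η‖ / ‖η‖) • η) (ξ - η) : ℝ) := by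
  set m : ℝ := min (1/3 : ℝ) (((3/2:ℝ) ^ (g₀ - 1) - 1) / 4) with hmdef
  have hκpos : 0 < (3/2:ℝ) ^ (g₀ - 1) - 1 := by
    have : (3/2:ℝ) ^ (0:ℝ) < (3/2:ℝ) ^ (g₀ - 1) := by
      rw [Real.rpow_lt_rpow_left_iff (by norm_num : (1:ℝ) < 3/2)]
      linarith
    rw [Real.rpow_zero] at this
    linarith
  have hm0 : 0 < m := lt_min (by norm_num) (by linarith)
  have hpow8 : (0:ℝ) < (8:ℝ) ^ (1 - gS) := Real.rpow_pos_of_pos (by norm_num) _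
  refine ⟨m * (8:ℝ) ^ (1 - gS), mul_pos hm0 hpow8, ?_⟩
  intro g g' hsc N hN ξ η hxi
  have hmono := sc_mono hg₀ hsc
  set r : ℝ := ‖ξ - η‖ with hrdef
  set x : ℝ := ‖ξ‖ with hxdef
  set y : ℝ := ‖η‖ with hydef
  set cc : ℝ := (inner ℝ ξ η : ℝ) with hccdef
  have hx : 0 ≤ x := norm_nonneg _
  have hy : 0 ≤ y := norm_nonneg _
  have hr : 0 < r := lt_of_le_of_lt (by linarith) hxi
  have hr2 : r ^ 2 = x ^ 2 + y ^ 2 - 2 * cc := by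
    have hns : ‖ξ - η‖ ^ 2 = ‖ξ‖ ^ 2 - 2 * (inner ℝ ξ η : ℝ) + ‖η‖ ^ 2 :=
      norm_sub_sq_real ξ η
    rw [hrdef, hxdef, hydef, hccdef]
    linarith [hns]
  have hc : |cc| ≤ x * y := abs_real_inner_le_norm ξ η
  have hinner : (inner ℝ ((g x / x) • ξ - (g y / y) • η) (ξ - η) : ℝ)
      = (g x / x) * x ^ 2 + (g y / y) * y ^ 2 - (g x / x + g y / y) * cc := by
    simp only [inner_sub_left, inner_sub_right, real_inner_smul_left,
      real_inner_self_eq_norm_sq]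
    have hcomm : (inner ℝ η ξ : ℝ) = cc := by
      rw [hccdef]; exact (real_inner_comm η ξ).symm
    rw [hcomm, ← hxdef, ← hydef]
    ring
  have hcore := sc_core hg₀ hle hsc hr hx hy hxi hc hr2
  rw [hinner]
  have hg8 : 0 < g (r / 8) := hsc.2.1 _ (by linarith)
  have hgr : 0 < g r := hsc.2.1 _ hr
  -- integral bound
  have hmIcc : MonotoneOn g (Set.uIcc 0 r) := by
    rw [Set.uIcc_of_le hr.le]
    exact fun u hu v hv huv => hmono u v hu.1 huv
  have hintg : IntervalIntegrable g MeasureTheory.volume 0 r := hmIcc.intervalIntegrable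
  have hIle : (∫ s in (0:ℝ)..r, g s) ≤ r * g r := by
    have h1 : (∫ s in (0:ℝ)..r, g s) ≤ ∫ _s in (0:ℝ)..r, g r :=
      intervalIntegral.integral_mono_on hr.le hintg intervalIntegrable_const
        (fun u hu => hmono u r hu.1 hu.2)
    rwa [intervalIntegral.integral_const, smul_eq_mul, sub_zero] at h1
  have hcomp : g r ≤ (8:ℝ) ^ (gS - 1) * g (r / 8) := by
    have := sc_ratio_upper hg₀ hle hsc (show (0:ℝ) < r / 8 by linarith)
      (by norm_num : (1:ℝ) ≤ 8)
    rwa [show (8:ℝ) * (r / 8) = r by ring] at this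
  have hpowmul : (8:ℝ) ^ (1 - gS) * (8:ℝ) ^ (gS - 1) = 1 := by
    rw [← Real.rpow_add (by norm_num : (0:ℝ) < 8)]
    norm_num
  have hstep1 : m * (8:ℝ) ^ (1 - gS) * (∫ s in (0:ℝ)..r, g s)
      ≤ m * (8:ℝ) ^ (1 - gS) * (r * g r) :=
    mul_le_mul_of_nonneg_left hIle (by positivity)
  have hstep2 : m * (8:ℝ) ^ (1 - gS) * (r * g r)
      ≤ m * (8:ℝ) ^ (1 - gS) * (r * ((8:ℝ) ^ (gS - 1) * g (r / 8))) := by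
    apply mul_le_mul_of_nonneg_left _ (by positivity)
    exact mul_le_mul_of_nonneg_left hcomp hr.le
  have hstep3 : m * (8:ℝ) ^ (1 - gS) * (r * ((8:ℝ) ^ (gS - 1) * g (r / 8)))
      = m * g (r / 8) * r := by
    linear_combination (m * g (r / 8) * r) * hpowmul
  linarith
end
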